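/- arXiv:0912.4988 — 2 statements merged into one kernel-verified Lean document; each statement's English description precedes it below -/
import Mathlib

section
/- Let A ∈ ℝ^{n×N} have unit-norm columns a_1,…,a_N, let W_1,…,W_N be subspaces of ℝ^M, and let Y ∈ ℝ^{n×M}. If c⁰ is a block coefficient vector satisfying A·U(c⁰) = Y and ‖c⁰‖_{2,0} < (1/2)(1 + μ_f^{-1}), where μ_f is the fusion coherence of (A,(W_j)), then c⁰ is the unique solution of problem (P1), i.e., every block vector c ≠ c⁰ with A·U(c) = Y satisfies ‖c⁰‖_{2,1} < ‖c‖_{2,1}. -/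
open scoped BigOperators
open Matrix

/-- Euclidean norm of a finite-dimensional real vector. -/
noncomputable def norm2 {ι : Type*} [Fintype ι] (v : ι → ℝ) : ℝ :=
  Real.sqrt (∑ i, v i ^ 2)

/-- Mixed ℓ₂,₁ norm of a block coefficient vector. -/
noncomputable def l21 {N : ℕ} {m : Fin N → ℕ} (c : ∀ j, Fin (m j) → ℝ) : ℝ :=
  ∑ j, norm2 (c j)

open Classical in
/-- Mixed ℓ₂,₀ "norm": number of nonzero blocks. -/
noncomputable def l20 {N : ℕ} {m : Fin N → ℕ} (c : ∀ j, Fin (m j) → ℝ) : ℕ :=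
  (Finset.univ.filter fun j => c j ≠ 0).card

/-- The matrix U(c) whose j-th row is (U_j c_j)ᵀ. -/
noncomputable def Ucmat {N M : ℕ} {m : Fin N → ℕ}
    (U : ∀ j, Matrix (Fin M) (Fin (m j)) ℝ)
    (c : ∀ j, Fin (m j) → ℝ) : Matrix (Fin N) (Fin M) ℝ :=
  Matrix.of fun j i => (U j).mulVec (c j) i

/-- The ℓ₂ → ℓ₂ operator norm of a real matrix. -/
noncomputable def opNorm {ι κ : Type*} [Fintype ι] [Fintype κ]
    (B : Matrix ι κ ℝ) : ℝ :=
  sSup {r : ℝ | ∃ v : κ → ℝ, norm2 v ≤ 1 ∧ r = norm2 (B.mulVec v)}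

/-- Fusion coherence: max over j ≠ k of |⟨a_j,a_k⟩|·‖P_j P_k‖₂→₂. -/
noncomputable def fusionCoherence {n N M : ℕ} (A : Matrix (Fin n) (Fin N) ℝ)
    (P : Fin N → Matrix (Fin M) (Fin M) ℝ) : ℝ :=
  sSup {r : ℝ | ∃ j k : Fin N, j ≠ k ∧
    r = |∑ i, A i j * A i k| * opNorm (P j * P k)}

section helpers
variable {ι κ : Type*} [Fintype ι] [Fintype κ]

lemma norm2_eq (v : ι → ℝ) :
    norm2 v = ‖(WithLp.linearEquiv 2 ℝ (ι → ℝ)).symm v‖ := by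
  rw [EuclideanSpace.norm_eq]
  simp [norm2, sq_abs, WithLp.linearEquiv]

lemma norm2_nonneg (v : ι → ℝ) : 0 ≤ norm2 v := Real.sqrt_nonneg _

lemma norm2_zero : norm2 (0 : ι → ℝ) = 0 := by
  simp [norm2]

lemma norm2_eq_zero {v : ι → ℝ} (h : norm2 v = 0) : v = 0 := by
  rw [norm2_eq] at h
  have := norm_eq_zero.mp h
  simpa using congrArg (WithLp.linearEquiv 2 ℝ (ι → ℝ)) this

lemma norm2_pos {v : ι → ℝ} (h : v ≠ 0) : 0 < norm2 v := by
  rcases lt_or_eq_of_le (norm2_nonneg v) with h1 | h1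
  · exact h1
  · exact absurd (norm2_eq_zero h1.symm) h

lemma norm2_sq (v : ι → ℝ) : norm2 v ^ 2 = ∑ i, v i ^ 2 :=
  Real.sq_sqrt (Finset.sum_nonneg fun i _ => sq_nonneg _)

lemma norm2_smul (a : ℝ) (v : ι → ℝ) : norm2 (a • v) = |a| * norm2 v := by
  rw [norm2_eq, norm2_eq, _root_.map_smul, norm_smul, Real.norm_eq_abs]

lemma norm2_neg (v : ι → ℝ) : norm2 (-v) = norm2 v := by
  have := norm2_smul (-1) v
  simpa using this

lemma norm2_sum_le {κ' : Type*} (s : Finset κ') (f : κ' → ι → ℝ) :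
    norm2 (∑ k ∈ s, f k) ≤ ∑ k ∈ s, norm2 (f k) := by
  simp only [norm2_eq, map_sum]
  exact norm_sum_le _ _

lemma norm2_cs (u v : ι → ℝ) : |∑ i, u i * v i| ≤ norm2 u * norm2 v := by
  have h : ∑ i, u i * v i =
      (inner ℝ ((WithLp.linearEquiv 2 ℝ (ι → ℝ)).symm u)
        ((WithLp.linearEquiv 2 ℝ (ι → ℝ)).symm v) : ℝ) := by
    rw [PiLp.inner_apply]; simp [WithLp.linearEquiv, mul_comm]
  rw [h, norm2_eq, norm2_eq]
  exact abs_real_inner_le_norm _ _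

lemma norm2_sub_le (u w : ι → ℝ) : norm2 u - norm2 w ≤ norm2 (u + w) := by
  simp only [norm2_eq, map_add]
  have := norm_add_le ((WithLp.linearEquiv 2 ℝ (ι → ℝ)).symm u + (WithLp.linearEquiv 2 ℝ (ι → ℝ)).symm w) (-(WithLp.linearEquiv 2 ℝ (ι → ℝ)).symm w)
  simp only [add_neg_cancel_right, norm_neg] at this
  linarith

lemma dot_self_eq (v : ι → ℝ) : v ⬝ᵥ v = ∑ i, v i ^ 2 := by
  simp [dotProduct, sq]

lemma norm2_eq_of_sq_eq {v : ι → ℝ} {w : κ → ℝ}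
    (h : ∑ i, v i ^ 2 = ∑ i, w i ^ 2) : norm2 v = norm2 w := by
  simp [norm2, h]

lemma norm2_cs' (u v : ι → ℝ) : |u ⬝ᵥ v| ≤ norm2 u * norm2 v := by
  simpa [dotProduct] using norm2_cs u v

lemma norm2_mulVec_isometry {Mdim mdim : ℕ} (U : Matrix (Fin Mdim) (Fin mdim) ℝ)
    (hU : Uᵀ * U = 1) (x : Fin mdim → ℝ) : norm2 (U.mulVec x) = norm2 x := by
  apply norm2_eq_of_sq_eq
  have h1 : U.mulVec x ⬝ᵥ U.mulVec x = x ⬝ᵥ x := by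
    rw [Matrix.dotProduct_mulVec]
    congr 1
    rw [← Matrix.mulVec_transpose, Matrix.mulVec_mulVec, hU, Matrix.one_mulVec]
  rw [← dot_self_eq, ← dot_self_eq, h1]

lemma norm2_mulVec_le_frob (B : Matrix ι κ ℝ) (v : κ → ℝ) (hv : norm2 v ≤ 1) :
    norm2 (B.mulVec v) ≤ Real.sqrt (∑ i, norm2 (fun k => B i k) ^ 2) := by
  have hb : ∀ i, (B.mulVec v i) ^ 2 ≤ norm2 (fun k => B i k) ^ 2 := by
    intro i
    have h1 : |B.mulVec v i| ≤ norm2 (fun k => B i k) * norm2 v := norm2_cs _ _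
    have h2 : norm2 (fun k => B i k) * norm2 v ≤ norm2 (fun k => B i k) := by
      nlinarith [norm2_nonneg (fun k => B i k), norm2_nonneg v]
    calc (B.mulVec v i) ^ 2 = |B.mulVec v i| ^ 2 := (sq_abs _).symm
      _ ≤ norm2 (fun k => B i k) ^ 2 := by
          apply pow_le_pow_left₀ (abs_nonneg _) (h1.trans h2)
  unfold norm2
  apply Real.sqrt_le_sqrt
  exact Finset.sum_le_sum fun i _ => hb i

lemma opNorm_bddAbove (B : Matrix ι κ ℝ) :
    BddAbove {r : ℝ | ∃ v : κ → ℝ, norm2 v ≤ 1 ∧ r = norm2 (B.mulVec v)} := by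
  refine ⟨Real.sqrt (∑ i, norm2 (fun k => B i k) ^ 2), ?_⟩
  rintro r ⟨v, hv, rfl⟩
  exact norm2_mulVec_le_frob B v hv

lemma opNorm_set_nonempty (B : Matrix ι κ ℝ) :
    (0 : ℝ) ∈ {r : ℝ | ∃ v : κ → ℝ, norm2 v ≤ 1 ∧ r = norm2 (B.mulVec v)} :=
  ⟨0, by simp [norm2_zero], by simp [Matrix.mulVec_zero, norm2_zero]⟩

lemma opNorm_nonneg (B : Matrix ι κ ℝ) : 0 ≤ opNorm B :=
  le_csSup (opNorm_bddAbove B) (opNorm_set_nonempty B)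

lemma opNorm_le (B : Matrix ι κ ℝ) {C : ℝ}
    (h : ∀ v : κ → ℝ, norm2 v ≤ 1 → norm2 (B.mulVec v) ≤ C) : opNorm B ≤ C := by
  apply csSup_le ⟨0, opNorm_set_nonempty B⟩
  rintro r ⟨v, hv, rfl⟩
  exact h v hv

lemma norm2_mulVec_le (B : Matrix ι κ ℝ) (v : κ → ℝ) :
    norm2 (B.mulVec v) ≤ opNorm B * norm2 v := by
  rcases eq_or_ne v 0 with rfl | hv
  · simp [Matrix.mulVec_zero, norm2_zero, opNorm_nonneg]
  · have ht : 0 < norm2 v := norm2_pos hv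
    set t := norm2 v
    have hw : norm2 (t⁻¹ • v) ≤ 1 := by
      rw [norm2_smul, abs_of_pos (inv_pos.mpr ht), inv_mul_cancel₀ ht.ne']
    have hmem : norm2 (B.mulVec (t⁻¹ • v)) ≤ opNorm B :=
      le_csSup (opNorm_bddAbove B) ⟨t⁻¹ • v, hw, rfl⟩
    rw [Matrix.mulVec_smul, norm2_smul, abs_of_pos (inv_pos.mpr ht)] at hmem
    calc norm2 (B.mulVec v) = t * (t⁻¹ * norm2 (B.mulVec v)) := by field_simp
      _ ≤ t * opNorm B := mul_le_mul_of_nonneg_left hmem ht.le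
      _ = opNorm B * t := mul_comm _ _

/-- ‖Uᵀ x‖ ≤ ‖x‖ when UᵀU = 1. -/
lemma norm2_transpose_mulVec_le {Mdim mdim : ℕ}
    (U : Matrix (Fin Mdim) (Fin mdim) ℝ) (hU : Uᵀ * U = 1) (x : Fin Mdim → ℝ) :
    norm2 (Uᵀ.mulVec x) ≤ norm2 x := by
  set y := Uᵀ.mulVec x with hy
  rcases eq_or_ne y 0 with h0 | h0
  · rw [h0, norm2_zero]; exact norm2_nonneg x
  · have hyp : 0 < norm2 y := norm2_pos h0
    have h1 : y ⬝ᵥ y = (U.mulVec y) ⬝ᵥ x := by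
      rw [hy, Matrix.dotProduct_mulVec, Matrix.vecMul_transpose]
    have h2 : norm2 y ^ 2 ≤ norm2 y * norm2 x := by
      calc norm2 y ^ 2 = y ⬝ᵥ y := by rw [norm2_sq, dot_self_eq]
        _ ≤ |(U.mulVec y) ⬝ᵥ x| := by rw [h1]; exact le_abs_self _
        _ ≤ norm2 (U.mulVec y) * norm2 x := norm2_cs' _ _
        _ = norm2 y * norm2 x := by rw [norm2_mulVec_isometry U hU]
    nlinarith

lemma norm2_proj_mulVec_le {Mdim mdim : ℕ}
    (U : Matrix (Fin Mdim) (Fin mdim) ℝ) (hU : Uᵀ * U = 1) (x : Fin Mdim → ℝ) :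
    norm2 ((U * Uᵀ).mulVec x) ≤ norm2 x := by
  rw [← Matrix.mulVec_mulVec, norm2_mulVec_isometry U hU]
  exact norm2_transpose_mulVec_le U hU x

end helpers

/-- If A·U(c⁰)=Y and ‖c⁰‖₂,₀ < (1/2)(1 + μ_f⁻¹), then c⁰ is the unique
solution of (P1). -/
theorem stmt1 {n N M : ℕ} {m : Fin N → ℕ}
    (A : Matrix (Fin n) (Fin N) ℝ)
    (hA : ∀ j, norm2 (fun i => A i j) = 1)
    (U : ∀ j, Matrix (Fin M) (Fin (m j)) ℝ)
    (hU : ∀ j, (U j)ᵀ * U j = 1)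
    (Y : Matrix (Fin n) (Fin M) ℝ)
    (c0 : ∀ j, Fin (m j) → ℝ)
    (hc0 : A * Ucmat U c0 = Y)
    (hsparse : (l20 c0 : ℝ) <
      (1 + (fusionCoherence A (fun j => U j * (U j)ᵀ))⁻¹) / 2) :
    ∀ c : (∀ j, Fin (m j) → ℝ),
      A * Ucmat U c = Y → c ≠ c0 → l21 c0 < l21 c := by
  classical
  intro c hc hne
  set P : Fin N → Matrix (Fin M) (Fin M) ℝ := fun j => U j * (U j)ᵀ with hPdef
  set μ := fusionCoherence A P with hμdef
  set h : ∀ j, Fin (m j) → ℝ := fun j => c j - c0 j with hhdef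
  -- kernel property
  have hker : A * Ucmat U h = 0 := by
    have h1 : Ucmat U h = Ucmat U c - Ucmat U c0 := by
      ext j i
      simp [Ucmat, hhdef, Matrix.mulVec_sub]
    rw [h1, Matrix.mul_sub, hc, hc0, sub_self]
  -- the Gram matrix entries
  set g : Fin N → Fin N → ℝ := fun j k => ∑ l, A l j * A l k with hgdef
  have hgjj : ∀ j, g j j = 1 := by
    intro j
    have h1 := hA j
    have h2 : norm2 (fun i => A i j) ^ 2 = 1 := by rw [h1]; norm_num
    rw [norm2_sq] at h2
    simpa [hgdef, sq] using h2
  set v : ∀ j, Fin M → ℝ := fun j => (U j).mulVec (h j) with hvdef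
  have hnv : ∀ j, norm2 (v j) = norm2 (h j) := fun j =>
    norm2_mulVec_isometry (U j) (hU j) (h j)
  -- row identity : ∑ k, g j k • v k = 0
  have hrow : ∀ j, ∑ k, g j k • v k = 0 := by
    intro j
    have h0 : (Aᵀ * A) * Ucmat U h = 0 := by
      rw [Matrix.mul_assoc, hker, Matrix.mul_zero]
    funext i
    have h1 := congrFun (congrFun h0 j) i
    simp only [Matrix.mul_apply, Matrix.transpose_apply, Matrix.zero_apply] at h1
    simpa [Finset.sum_apply, Pi.smul_apply, hgdef, hvdef, Ucmat, smul_eq_mul] using h1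
  -- v j = - ∑ over erase j
  have hvj : ∀ j, v j = -∑ k ∈ Finset.univ.erase j, g j k • v k := by
    intro j
    have h1 := hrow j
    rw [← Finset.sum_erase_add _ _ (Finset.mem_univ j), hgjj j, one_smul] at h1
    linear_combination (norm := abel) h1
  -- projection invariance
  have hPv : ∀ j, (P j).mulVec (v j) = v j := by
    intro j
    rw [hvdef]
    show (U j * (U j)ᵀ).mulVec ((U j).mulVec (h j)) = _
    rw [Matrix.mulVec_mulVec, Matrix.mul_assoc, hU j, Matrix.mul_one]
  -- the key per-index inequality
  have hμ_mem : ∀ j k : Fin N, j ≠ k → |g j k| * opNorm (P j * P k) ≤ μ := by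
    intro j k hjk
    apply le_csSup
    · refine ⟨1, ?_⟩
      rintro r ⟨j', k', hne', rfl⟩
      have hg : |∑ i, A i j' * A i k'| ≤ 1 := by
        have := norm2_cs (fun i => A i j') (fun i => A i k')
        rw [hA j', hA k'] at this
        simpa using this
      have hop : opNorm (P j' * P k') ≤ 1 := by
        apply opNorm_le
        intro w hw
        rw [← Matrix.mulVec_mulVec]
        calc norm2 ((P j').mulVec ((P k').mulVec w))
            ≤ norm2 ((P k').mulVec w) := norm2_proj_mulVec_le (U j') (hU j') _
          _ ≤ norm2 w := norm2_proj_mulVec_le (U k') (hU k') _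
          _ ≤ 1 := hw
      calc |∑ i, A i j' * A i k'| * opNorm (P j' * P k')
          ≤ 1 * 1 := mul_le_mul hg hop (opNorm_nonneg _) zero_le_one
        _ = 1 := one_mul 1
    · exact ⟨j, k, hjk, rfl⟩
  set T := ∑ k, norm2 (h k) with hTdef
  have hkey : ∀ j, norm2 (h j) ≤ μ * (T - norm2 (h j)) := by
    intro j
    have hvj2 : v j =
        -∑ k ∈ Finset.univ.erase j, g j k • ((P j * P k).mulVec (v k)) := by
      conv_lhs => rw [← hPv j, hvj j]
      have hlin : ∀ w, (P j).mulVec w = (Matrix.mulVecLin (P j)) w := fun _ => rfl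
      rw [hlin, map_neg, map_sum]
      congr 1
      apply Finset.sum_congr rfl
      intro k _
      rw [_root_.map_smul]
      congr 1
      rw [← hlin]
      conv_lhs => rw [← hPv k]
      rw [Matrix.mulVec_mulVec]
    have h1 : norm2 (h j) ≤ ∑ k ∈ Finset.univ.erase j, μ * norm2 (h k) := by
      rw [← hnv j, hvj2, norm2_neg]
      refine (norm2_sum_le _ _).trans (Finset.sum_le_sum ?_)
      intro k hk
      have hjk : j ≠ k := (Finset.ne_of_mem_erase hk).symm
      calc norm2 (g j k • ((P j * P k).mulVec (v k)))
          = |g j k| * norm2 ((P j * P k).mulVec (v k)) := norm2_smul _ _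
        _ ≤ |g j k| * (opNorm (P j * P k) * norm2 (v k)) :=
            mul_le_mul_of_nonneg_left (norm2_mulVec_le _ _) (abs_nonneg _)
        _ = |g j k| * opNorm (P j * P k) * norm2 (v k) := (mul_assoc _ _ _).symm
        _ ≤ μ * norm2 (v k) :=
            mul_le_mul_of_nonneg_right (hμ_mem j k hjk) (norm2_nonneg _)
        _ = μ * norm2 (h k) := by rw [hnv k]
    calc norm2 (h j) ≤ ∑ k ∈ Finset.univ.erase j, μ * norm2 (h k) := h1
      _ = μ * ∑ k ∈ Finset.univ.erase j, norm2 (h k) := (Finset.mul_sum _ _ _).symm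
      _ = μ * (T - norm2 (h j)) := by
          rw [Finset.sum_erase_eq_sub (Finset.mem_univ j)]
  -- T is positive
  have hj0 : ∃ j0, h j0 ≠ 0 := by
    by_contra hcon
    push_neg at hcon
    apply hne
    funext j i
    have h2 : c j - c0 j = 0 := hcon j
    exact congrFun (sub_eq_zero.mp h2) i
  obtain ⟨j0, hj0⟩ := hj0
  have hT0 : 0 < T := by
    have h1 : norm2 (h j0) ≤ T :=
      Finset.single_le_sum (fun k _ => norm2_nonneg (h k)) (Finset.mem_univ j0)
    exact lt_of_lt_of_le (norm2_pos hj0) h1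
  -- erase-sum nonneg, gives T - ‖h j‖ ≥ 0
  have hTge : ∀ j, 0 ≤ T - norm2 (h j) := by
    intro j
    rw [← Finset.sum_erase_eq_sub (Finset.mem_univ j)]
    exact Finset.sum_nonneg fun k _ => norm2_nonneg _
  -- μ must be positive (else contradiction)
  rcases le_or_gt μ 0 with hμ0 | hμ0
  · exfalso
    have h1 : ∀ j, norm2 (h j) ≤ 0 := by
      intro j
      have := hkey j
      nlinarith [hTge j]
    have : T ≤ 0 := Finset.sum_nonpos fun k _ => h1 k
    linarith
  -- main case μ > 0
  set S : Finset (Fin N) := Finset.univ.filter (fun j => c0 j ≠ 0) with hSdef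
  have hcard : (l20 c0 : ℝ) = (S.card : ℝ) := by
    unfold l20
    congr 2
  set σ := ∑ j ∈ S, norm2 (h j) with hσdef
  have hσnn : 0 ≤ σ := Finset.sum_nonneg fun j _ => norm2_nonneg _
  have hsum : σ * (1 + μ) ≤ μ * (S.card * T) := by
    have h1 : σ ≤ ∑ j ∈ S, μ * (T - norm2 (h j)) :=
      Finset.sum_le_sum fun j _ => hkey j
    have h2 : ∑ j ∈ S, μ * (T - norm2 (h j)) = μ * (S.card * T - σ) := by
      rw [← Finset.mul_sum]
      congr 1
      rw [Finset.sum_sub_distrib, Finset.sum_const, nsmul_eq_mul]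
    rw [h2] at h1
    nlinarith
  have hμS : 2 * μ * S.card < μ + 1 := by
    rw [hcard] at hsparse
    have h1 : (S.card : ℝ) < (1 + μ⁻¹) / 2 := hsparse
    have h2 : μ * μ⁻¹ = 1 := mul_inv_cancel₀ hμ0.ne'
    nlinarith
  have h2σT : 2 * σ < T := by
    nlinarith [hT0, hμ0, hσnn]
  -- now conclude
  have hSsum0 : l21 c0 = ∑ j ∈ S, norm2 (c0 j) := by
    unfold l21
    symm
    apply Finset.sum_subset (Finset.subset_univ S)
    intro j _ hjS
    have : c0 j = 0 := by
      by_contra hc0j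
      exact hjS (Finset.mem_filter.mpr ⟨Finset.mem_univ j, hc0j⟩)
    rw [this, norm2_zero]
  have hsplit : l21 c = ∑ j ∈ S, norm2 (c j) + ∑ j ∈ Finset.univ.filter (fun j => ¬ c0 j ≠ 0), norm2 (c j) := by
    unfold l21
    rw [hSdef]
    exact (Finset.sum_filter_add_sum_filter_not _ _ _).symm
  have hcompl : ∑ j ∈ Finset.univ.filter (fun j => ¬ c0 j ≠ 0), norm2 (c j)
      = ∑ j ∈ Finset.univ.filter (fun j => ¬ c0 j ≠ 0), norm2 (h j) := by
    apply Finset.sum_congr rfl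
    intro j hj
    have hc0j : c0 j = 0 := not_not.mp (Finset.mem_filter.mp hj).2
    congr 1
    funext i
    simp [hhdef, hc0j]
  have hhsplit : σ + ∑ j ∈ Finset.univ.filter (fun j => ¬ c0 j ≠ 0), norm2 (h j) = T := by
    rw [hσdef, hSdef, hTdef]
    exact Finset.sum_filter_add_sum_filter_not _ _ _
  have hlower : ∀ j ∈ S, norm2 (c0 j) - norm2 (h j) ≤ norm2 (c j) := by
    intro j _
    have hcj : c0 j + h j = c j := by
      funext i
      simp [hhdef]
    rw [← hcj]
    exact norm2_sub_le _ _
  have hSbound : ∑ j ∈ S, (norm2 (c0 j) - norm2 (h j)) ≤ ∑ j ∈ S, norm2 (c j) :=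
    Finset.sum_le_sum hlower
  rw [Finset.sum_sub_distrib] at hSbound
  have hfinal : l21 c0 + (T - 2 * σ) ≤ l21 c := by
    rw [hsplit, hcompl, hSsum0]
    linarith [hhsplit, hSbound]
  linarith
end

section
/- Let b = (b_1,…,b_k) ∈ ℝ^k, let S = {j_1,…,j_k} ⊆ {1,…,N}, and for each j let Ũ_j ∈ ℝ^{M×Nm} be the block matrix whose j-th M×m block equals U_j and whose other blocks are zero. Then ‖∑_{ℓ=1}^k b_ℓ Ũ_{j_ℓ}‖_{2→2} ≤ ‖b‖_∞ · √( 1 + max_{i ∈ S} ∑_{j ∈ S, j ≠ i} λ_max(P_i P_j)^{1/2} ), where λ_max denotes the largest eigenvalue and P_j = U_j U_j^T. -/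
open scoped BigOperators
open Matrix

/-- Ũ_j ∈ ℝ^{M×Nm}: the horizontal concatenation of N blocks of size M×m
whose j-th block is U_j and whose other blocks are zero. -/
noncomputable def Utilde {N M m : ℕ} (U : Fin N → Matrix (Fin M) (Fin m) ℝ)
    (j : Fin N) : Matrix (Fin M) (Fin N × Fin m) ℝ :=
  Matrix.of fun i p => if p.1 = j then U j i p.2 else 0

/-- λ_max(B): the largest real eigenvalue of B (as a supremum over the set
of real eigenvalues). -/
noncomputable def lamMax {M : ℕ} (B : Matrix (Fin M) (Fin M) ℝ) : ℝ :=
  sSup {r : ℝ | ∃ v : Fin M → ℝ, v ≠ 0 ∧ B.mulVec v = r • v}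

/- ### Auxiliary lemmas -/

open scoped RealInnerProductSpace in
private lemma exists_top_eig {m : ℕ} (G : Matrix (Fin m) (Fin m) ℝ) (hG : G.IsHermitian) :
    ∃ μ : ℝ, (∀ x : Fin m → ℝ, x ⬝ᵥ G.mulVec x ≤ μ * (x ⬝ᵥ x)) ∧
      (μ = 0 ∨ ∃ v : Fin m → ℝ, v ≠ 0 ∧ G.mulVec v = μ • v) := by
  rcases isEmpty_or_nonempty (Fin m) with hm | hm
  · exact ⟨0, fun x => by simp [dotProduct], Or.inl rfl⟩
  obtain ⟨i0, -, hmax⟩ := Finset.exists_max_image Finset.univ hG.eigenvalues Finset.univ_nonempty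
  set b := hG.eigenvectorBasis with hb
  have hGT : Gᵀ = G := by
    rw [← Matrix.conjTranspose_eq_transpose_of_trivial]; exact hG
  have hsym : ∀ u z : Fin m → ℝ, u ⬝ᵥ G.mulVec z = (G.mulVec u) ⬝ᵥ z := by
    intro u z
    rw [Matrix.dotProduct_mulVec, ← Matrix.mulVec_transpose, hGT]
  have hdot : ∀ u w : EuclideanSpace ℝ (Fin m), ⟪u, w⟫ = (u : Fin m → ℝ) ⬝ᵥ (w : Fin m → ℝ) := by
    intro u w
    simp [PiLp.inner_apply, dotProduct, mul_comm]
  refine ⟨hG.eigenvalues i0, ?_, Or.inr ⟨b i0, ?_, hG.mulVec_eigenvectorBasis i0⟩⟩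
  · intro x
    set x' : EuclideanSpace ℝ (Fin m) := WithLp.toLp 2 x with hx'
    have hrepr : ∀ i, b.repr (WithLp.toLp 2 (G.mulVec x : Fin m → ℝ) : EuclideanSpace ℝ (Fin m)) i
        = hG.eigenvalues i * b.repr x' i := by
      intro i
      rw [OrthonormalBasis.repr_apply_apply, OrthonormalBasis.repr_apply_apply, hdot, hdot]
      show (⇑(b i) : Fin m → ℝ) ⬝ᵥ (G.mulVec x) = hG.eigenvalues i * ((⇑(b i) : Fin m → ℝ) ⬝ᵥ x)
      rw [hsym, hG.mulVec_eigenvectorBasis i, smul_dotProduct]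
      rfl
    have hinner1 : x ⬝ᵥ G.mulVec x = ∑ i, b.repr x' i * (hG.eigenvalues i * b.repr x' i) := by
      have h0 := hdot x' (WithLp.toLp 2 (G.mulVec x : Fin m → ℝ) : EuclideanSpace ℝ (Fin m))
      rw [← h0, ← b.repr.inner_map_map x' _, PiLp.inner_apply]
      simp only [RCLike.inner_apply, starRingEnd_apply, star_trivial]
      exact Finset.sum_congr rfl fun i _ => by rw [hrepr i]; ring
    have hinner2 : x ⬝ᵥ x = ∑ i, b.repr x' i * b.repr x' i := by
      have h0 := hdot x' x'
      rw [← h0, ← b.repr.inner_map_map x' x', PiLp.inner_apply]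
      simp [RCLike.inner_apply, sq]
    rw [hinner1, hinner2, Finset.mul_sum]
    apply Finset.sum_le_sum
    intro i _
    have h1 : hG.eigenvalues i ≤ hG.eigenvalues i0 := hmax i (Finset.mem_univ _)
    nlinarith [sq_nonneg (b.repr x' i)]
  · intro h
    exact b.orthonormal.ne_zero i0 (by ext j; exact congrFun h j)

private lemma dot_self_nonneg {n : Type*} [Fintype n] (v : n → ℝ) : 0 ≤ v ⬝ᵥ v :=
  Finset.sum_nonneg fun i _ => mul_self_nonneg (v i)

private lemma norm2_eq_sqrt_dot {n : Type*} [Fintype n] (v : n → ℝ) :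
    norm2 v = Real.sqrt (v ⬝ᵥ v) := by
  unfold norm2 dotProduct
  congr 1
  exact Finset.sum_congr rfl fun i _ => sq (v i)

private lemma norm2_nonneg_s12 {n : Type*} [Fintype n] (v : n → ℝ) : 0 ≤ norm2 v :=
  Real.sqrt_nonneg _

private lemma abs_dot_le {n : Type*} [Fintype n] (x y : n → ℝ) :
    |x ⬝ᵥ y| ≤ norm2 x * norm2 y := by
  rw [norm2, norm2, ← Real.sqrt_sq_eq_abs, ← Real.sqrt_mul (by positivity)]
  exact Real.sqrt_le_sqrt (Finset.sum_mul_sq_le_sq_mul_sq Finset.univ x y)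

private lemma bddAbove_eigs {M : ℕ} (B : Matrix (Fin M) (Fin M) ℝ) :
    BddAbove {r : ℝ | ∃ v : Fin M → ℝ, v ≠ 0 ∧ B.mulVec v = r • v} := by
  use ∑ i, ∑ j, |B i j|
  rintro r ⟨v, hv, hBv⟩
  obtain ⟨iw, hiw⟩ := Function.ne_iff.mp hv
  have hiw' : v iw ≠ 0 := hiw
  obtain ⟨i0, -, hmax⟩ := Finset.exists_max_image Finset.univ (fun i => |v i|)
    ⟨iw, Finset.mem_univ _⟩
  have hpos : 0 < |v i0| := lt_of_lt_of_le (abs_pos.mpr hiw') (hmax iw (Finset.mem_univ _))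
  have h1 : (B.mulVec v) i0 = r * v i0 := by rw [hBv]; rfl
  have h2 : |r| * |v i0| = |∑ j, B i0 j * v j| := by
    rw [← abs_mul, ← h1]; rfl
  have h3 : |∑ j, B i0 j * v j| ≤ (∑ j, |B i0 j|) * |v i0| := by
    refine (Finset.abs_sum_le_sum_abs _ _).trans ?_
    rw [Finset.sum_mul]
    refine Finset.sum_le_sum fun j _ => ?_
    rw [abs_mul]
    exact mul_le_mul_of_nonneg_left (hmax j (Finset.mem_univ _)) (abs_nonneg _)
  have h4 : |r| ≤ ∑ j, |B i0 j| := le_of_mul_le_mul_right (h2 ▸ h3) hpos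
  calc r ≤ |r| := le_abs_self r
    _ ≤ ∑ j, |B i0 j| := h4
    _ ≤ ∑ i, ∑ j, |B i j| := Finset.single_le_sum (f := fun i => ∑ j, |B i j|)
        (fun i _ => Finset.sum_nonneg fun j _ => abs_nonneg _) (Finset.mem_univ i0)

private lemma diag_dot {N M m : ℕ} (U : Fin N → Matrix (Fin M) (Fin m) ℝ)
    (hU : ∀ j, (U j)ᵀ * U j = 1) (i : Fin N) (x y : Fin m → ℝ) :
    ((U i).mulVec x) ⬝ᵥ ((U i).mulVec y) = x ⬝ᵥ y := by
  rw [Matrix.dotProduct_mulVec, ← Matrix.mulVec_transpose, Matrix.mulVec_mulVec, hU i,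
    Matrix.one_mulVec]

private lemma cross_bound {N M m : ℕ} (U : Fin N → Matrix (Fin M) (Fin m) ℝ)
    (hU : ∀ j, (U j)ᵀ * U j = 1) (i j : Fin N) (x y : Fin m → ℝ) :
    |((U i).mulVec x) ⬝ᵥ ((U j).mulVec y)| ≤
      Real.sqrt (lamMax ((U i * (U i)ᵀ) * (U j * (U j)ᵀ))) * (norm2 x * norm2 y) := by
  have hRHS0 : 0 ≤ Real.sqrt (lamMax ((U i * (U i)ᵀ) * (U j * (U j)ᵀ))) * (norm2 x * norm2 y) :=
    mul_nonneg (Real.sqrt_nonneg _) (mul_nonneg (norm2_nonneg_s12 _) (norm2_nonneg_s12 _))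
  set D : Matrix (Fin m) (Fin m) ℝ := (U j)ᵀ * U i with hD
  have hstep : ((U i).mulVec x) ⬝ᵥ ((U j).mulVec y) = (D.mulVec x) ⬝ᵥ y := by
    rw [Matrix.dotProduct_mulVec, ← Matrix.mulVec_transpose, Matrix.mulVec_mulVec]
  set G : Matrix (Fin m) (Fin m) ℝ := Dᵀ * D with hG
  have hGD : ∀ z : Fin m → ℝ, (D.mulVec z) ⬝ᵥ (D.mulVec z) = z ⬝ᵥ (G.mulVec z) := by
    intro z
    rw [Matrix.dotProduct_mulVec, ← Matrix.mulVec_transpose, Matrix.mulVec_mulVec,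
      dotProduct_comm]
  have hGherm : G.IsHermitian := by
    have := Matrix.isHermitian_conjTranspose_mul_self D
    rwa [Matrix.conjTranspose_eq_transpose_of_trivial] at this
  obtain ⟨μ, hμ1, hμ2⟩ := exists_top_eig G hGherm
  have hCS : |((U i).mulVec x) ⬝ᵥ ((U j).mulVec y)| ≤ norm2 (D.mulVec x) * norm2 y := by
    rw [hstep]; exact abs_dot_le _ _
  rcases hμ2 with hμ0 | ⟨v, hv0, hveig⟩
  · have h1 : (D.mulVec x) ⬝ᵥ (D.mulVec x) ≤ 0 := by
      rw [hGD]; simpa [hμ0] using hμ1 x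
    have h2 : norm2 (D.mulVec x) = 0 := by
      rw [norm2_eq_sqrt_dot]
      have := Real.sqrt_le_sqrt h1
      simpa using le_antisymm (by simpa using this) (Real.sqrt_nonneg _)
    calc |((U i).mulVec x) ⬝ᵥ ((U j).mulVec y)| ≤ norm2 (D.mulVec x) * norm2 y := hCS
      _ = 0 := by rw [h2, zero_mul]
      _ ≤ _ := hRHS0
  · have hvv : 0 < v ⬝ᵥ v := by
      obtain ⟨iw, hiw⟩ := Function.ne_iff.mp hv0
      have h1 : v iw * v iw ≤ v ⬝ᵥ v :=
        Finset.single_le_sum (f := fun i => v i * v i)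
          (fun i _ => mul_self_nonneg _) (Finset.mem_univ iw)
      have h2 : 0 < v iw * v iw := mul_self_pos.mpr hiw
      linarith
    have hμnn : 0 ≤ μ := by
      have h1 : v ⬝ᵥ G.mulVec v = μ * (v ⬝ᵥ v) := by
        rw [hveig, dotProduct_smul, smul_eq_mul]
      have h2 : 0 ≤ v ⬝ᵥ G.mulVec v := by rw [← hGD]; exact dot_self_nonneg _
      nlinarith
    have hmem : μ ∈ {r : ℝ | ∃ w : Fin M → ℝ, w ≠ 0 ∧
        ((U i * (U i)ᵀ) * (U j * (U j)ᵀ)).mulVec w = r • w} := by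
      refine ⟨(U i).mulVec v, ?_, ?_⟩
      · intro h
        apply hv0
        have : (U i)ᵀ.mulVec ((U i).mulVec v) = 0 := by rw [h, Matrix.mulVec_zero]
        rwa [Matrix.mulVec_mulVec, hU i, Matrix.one_mulVec] at this
      · have hmat : ((U i * (U i)ᵀ) * (U j * (U j)ᵀ)) * U i = U i * G := by
          rw [hG, hD, Matrix.transpose_mul, Matrix.transpose_transpose]
          simp only [Matrix.mul_assoc]
        rw [Matrix.mulVec_mulVec, hmat, ← Matrix.mulVec_mulVec, hveig, Matrix.mulVec_smul]
    have hlam : μ ≤ lamMax ((U i * (U i)ᵀ) * (U j * (U j)ᵀ)) :=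
      le_csSup (bddAbove_eigs _) hmem
    have hnormDx : norm2 (D.mulVec x) ≤ Real.sqrt μ * norm2 x := by
      rw [norm2_eq_sqrt_dot, norm2_eq_sqrt_dot, ← Real.sqrt_mul hμnn]
      exact Real.sqrt_le_sqrt (by rw [hGD]; exact hμ1 x)
    calc |((U i).mulVec x) ⬝ᵥ ((U j).mulVec y)| ≤ norm2 (D.mulVec x) * norm2 y := hCS
      _ ≤ (Real.sqrt μ * norm2 x) * norm2 y :=
          mul_le_mul_of_nonneg_right hnormDx (norm2_nonneg_s12 _)
      _ ≤ Real.sqrt (lamMax ((U i * (U i)ᵀ) * (U j * (U j)ᵀ))) * (norm2 x * norm2 y) := by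
          rw [← mul_assoc]
          exact mul_le_mul_of_nonneg_right (mul_le_mul_of_nonneg_right
            (Real.sqrt_le_sqrt hlam) (norm2_nonneg_s12 _)) (norm2_nonneg_s12 _)

private lemma Utilde_mulVec {N M m : ℕ} (U : Fin N → Matrix (Fin M) (Fin m) ℝ)
    (j : Fin N) (v : Fin N × Fin m → ℝ) :
    (Utilde U j).mulVec v = (U j).mulVec (fun p => v (j, p)) := by
  ext i
  simp only [Matrix.mulVec, dotProduct, Utilde, Matrix.of_apply]
  rw [Fintype.sum_prod_type]
  rw [Finset.sum_eq_single j]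
  · simp
  · intro j' _ hj'
    apply Finset.sum_eq_zero
    intro p _
    simp [hj']
  · intro h
    exact absurd (Finset.mem_univ j) h

private lemma sum_dot {n ι : Type*} [Fintype n] (s : Finset ι) (f : ι → n → ℝ) (y : n → ℝ) :
    (∑ ℓ ∈ s, f ℓ) ⬝ᵥ y = ∑ ℓ ∈ s, f ℓ ⬝ᵥ y := by
  simp only [dotProduct, Finset.sum_apply, Finset.sum_mul]
  exact Finset.sum_comm

private lemma dot_sum {n ι : Type*} [Fintype n] (s : Finset ι) (x : n → ℝ) (f : ι → n → ℝ) :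
    x ⬝ᵥ (∑ ℓ ∈ s, f ℓ) = ∑ ℓ ∈ s, x ⬝ᵥ f ℓ := by
  simp only [dotProduct, Finset.sum_apply, Finset.mul_sum]
  exact Finset.sum_comm

private lemma swap_erase {k : ℕ} (F : Fin k → Fin k → ℝ) :
    ∑ ℓ, ∑ ℓ' ∈ Finset.univ.erase ℓ, F ℓ ℓ'
      = ∑ ℓ', ∑ ℓ ∈ Finset.univ.erase ℓ', F ℓ ℓ' := by
  have h : ∀ (a : Fin k) (g : Fin k → ℝ),
      ∑ x ∈ Finset.univ.erase a, g x = (∑ x, g x) - g a := by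
    intro a g
    rw [← Finset.add_sum_erase _ g (Finset.mem_univ a)]
    ring
  simp_rw [h]
  rw [Finset.sum_sub_distrib, Finset.sum_sub_distrib, Finset.sum_comm]

/-- The core estimate: for any unit vector `v`,
`‖(∑ ℓ b ℓ Ũ_{σ ℓ}) v‖ ≤ B √(1 + D)`. -/
private lemma key_est {N M m k : ℕ}
    (U : Fin N → Matrix (Fin M) (Fin m) ℝ)
    (hU : ∀ j, (U j)ᵀ * U j = 1)
    (b : Fin k → ℝ) (σ : Fin k → Fin N) (hσ : Function.Injective σ)
    (v : Fin N × Fin m → ℝ) (hv : norm2 v ≤ 1)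
    (B D : ℝ) (hB : ∀ ℓ, |b ℓ| ≤ B) (hBnn : 0 ≤ B) (hD0 : 0 ≤ D)
    (hrow : ∀ ℓ : Fin k, (∑ ℓ' ∈ Finset.univ.erase ℓ,
      Real.sqrt (lamMax ((U (σ ℓ) * (U (σ ℓ))ᵀ) * (U (σ ℓ') * (U (σ ℓ'))ᵀ)))) ≤ D) :
    norm2 ((∑ ℓ, b ℓ • Utilde U (σ ℓ)).mulVec v) ≤ B * Real.sqrt (1 + D) := by
  classical
  set w : Fin k → Fin m → ℝ := fun ℓ p => v (σ ℓ, p) with hw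
  set z : Fin k → Fin M → ℝ := fun ℓ => (U (σ ℓ)).mulVec (w ℓ) with hz
  set nn : Fin k → ℝ := fun ℓ => w ℓ ⬝ᵥ w ℓ with hnn
  set cc : Fin k → Fin k → ℝ := fun ℓ ℓ' =>
    Real.sqrt (lamMax ((U (σ ℓ) * (U (σ ℓ))ᵀ) * (U (σ ℓ') * (U (σ ℓ'))ᵀ))) with hcc
  have hnn0 : ∀ ℓ, 0 ≤ nn ℓ := fun ℓ => dot_self_nonneg _
  have hcc0 : ∀ ℓ ℓ', 0 ≤ cc ℓ ℓ' := fun _ _ => Real.sqrt_nonneg _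
  -- the image of v under the matrix
  have hsum_mulVec : ∀ (s : Finset (Fin k)), (∑ ℓ ∈ s, b ℓ • Utilde U (σ ℓ)).mulVec v
      = ∑ ℓ ∈ s, b ℓ • ((Utilde U (σ ℓ)).mulVec v) := by
    intro s
    induction s using Finset.induction_on with
    | empty => simp [Matrix.zero_mulVec]
    | insert _ _ h ih =>
        rw [Finset.sum_insert h, Finset.sum_insert h, Matrix.add_mulVec,
          Matrix.smul_mulVec, ih]
  have hAv : (∑ ℓ, b ℓ • Utilde U (σ ℓ)).mulVec v = ∑ ℓ, b ℓ • z ℓ := by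
    rw [hsum_mulVec]
    exact Finset.sum_congr rfl fun ℓ _ => by rw [Utilde_mulVec]
  -- expansion of the squared norm
  have hdotexp : (∑ ℓ, b ℓ • z ℓ) ⬝ᵥ (∑ ℓ, b ℓ • z ℓ)
      = ∑ ℓ, ∑ ℓ', (b ℓ * b ℓ') * (z ℓ ⬝ᵥ z ℓ') := by
    rw [sum_dot]
    refine Finset.sum_congr rfl fun ℓ _ => ?_
    rw [smul_dotProduct, dot_sum, Finset.smul_sum]
    refine Finset.sum_congr rfl fun ℓ' _ => ?_
    rw [dotProduct_smul, smul_eq_mul, smul_eq_mul]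
    ring
  -- diagonal bound
  have hdiag : ∀ ℓ : Fin k, (b ℓ * b ℓ) * (z ℓ ⬝ᵥ z ℓ) ≤ B^2 * nn ℓ := by
    intro ℓ
    have h1 : z ℓ ⬝ᵥ z ℓ = nn ℓ := diag_dot U hU (σ ℓ) (w ℓ) (w ℓ)
    have h2 : b ℓ * b ℓ ≤ B^2 := by
      calc b ℓ * b ℓ = |b ℓ| * |b ℓ| := (abs_mul_abs_self _).symm
        _ ≤ B * B := mul_le_mul (hB ℓ) (hB ℓ) (abs_nonneg _) hBnn
        _ = B^2 := (sq B).symm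
    rw [h1]
    exact mul_le_mul_of_nonneg_right h2 (hnn0 ℓ)
  -- off-diagonal bound
  have hoff : ∀ ℓ ℓ' : Fin k, (b ℓ * b ℓ') * (z ℓ ⬝ᵥ z ℓ')
      ≤ B^2/2 * (cc ℓ ℓ' * nn ℓ) + B^2/2 * (cc ℓ' ℓ * nn ℓ') := by
    intro ℓ ℓ'
    have ha : |z ℓ ⬝ᵥ z ℓ'| ≤ cc ℓ ℓ' * (norm2 (w ℓ) * norm2 (w ℓ')) :=
      cross_bound U hU (σ ℓ) (σ ℓ') (w ℓ) (w ℓ')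
    have hb' : |z ℓ ⬝ᵥ z ℓ'| ≤ cc ℓ' ℓ * (norm2 (w ℓ') * norm2 (w ℓ)) := by
      have h0 := cross_bound U hU (σ ℓ') (σ ℓ) (w ℓ') (w ℓ)
      rw [dotProduct_comm] at h0
      exact h0
    set a := norm2 (w ℓ) with hadef
    set a' := norm2 (w ℓ') with hadef'
    have haa : a * a = nn ℓ := by
      rw [hadef, norm2_eq_sqrt_dot]; exact Real.mul_self_sqrt (dot_self_nonneg _)
    have haa' : a' * a' = nn ℓ' := by
      rw [hadef', norm2_eq_sqrt_dot]; exact Real.mul_self_sqrt (dot_self_nonneg _)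
    have ha0 : 0 ≤ a := norm2_nonneg_s12 _
    have ha0' : 0 ≤ a' := norm2_nonneg_s12 _
    have hq2 : |z ℓ ⬝ᵥ z ℓ'| ≤ (cc ℓ ℓ' * nn ℓ + cc ℓ' ℓ * nn ℓ') / 2 := by
      rcases le_total (cc ℓ ℓ') (cc ℓ' ℓ) with h | h
      · nlinarith [ha, haa, haa', hcc0 ℓ ℓ',
          mul_nonneg (sub_nonneg.mpr h) (mul_self_nonneg a'),
          mul_nonneg (hcc0 ℓ ℓ') (sq_nonneg (a - a'))]
      · nlinarith [hb', haa, haa', hcc0 ℓ' ℓ,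
          mul_nonneg (sub_nonneg.mpr h) (mul_self_nonneg a),
          mul_nonneg (hcc0 ℓ' ℓ) (sq_nonneg (a - a'))]
    calc (b ℓ * b ℓ') * (z ℓ ⬝ᵥ z ℓ')
        ≤ |(b ℓ * b ℓ') * (z ℓ ⬝ᵥ z ℓ')| := le_abs_self _
      _ = (|b ℓ| * |b ℓ'|) * |z ℓ ⬝ᵥ z ℓ'| := by rw [abs_mul, abs_mul]
      _ ≤ (B * B) * |z ℓ ⬝ᵥ z ℓ'| :=
          mul_le_mul_of_nonneg_right
            (mul_le_mul (hB ℓ) (hB ℓ') (abs_nonneg _) hBnn) (abs_nonneg _)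
      _ = B^2 * |z ℓ ⬝ᵥ z ℓ'| := by rw [sq]
      _ ≤ B^2 * ((cc ℓ ℓ' * nn ℓ + cc ℓ' ℓ * nn ℓ') / 2) :=
          mul_le_mul_of_nonneg_left hq2 (sq_nonneg B)
      _ = B^2/2 * (cc ℓ ℓ' * nn ℓ) + B^2/2 * (cc ℓ' ℓ * nn ℓ') := by ring
  -- assemble the double sum
  set X := ∑ ℓ, ∑ ℓ' ∈ Finset.univ.erase ℓ, cc ℓ ℓ' * nn ℓ with hX
  set Y := ∑ ℓ, ∑ ℓ' ∈ Finset.univ.erase ℓ, cc ℓ' ℓ * nn ℓ' with hY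
  have hYX : Y = X := by
    rw [hY, hX, swap_erase (fun ℓ ℓ' => cc ℓ' ℓ * nn ℓ')]
  have hstep1 : ∑ ℓ, ∑ ℓ', (b ℓ * b ℓ') * (z ℓ ⬝ᵥ z ℓ')
      ≤ ∑ ℓ, (B^2 * nn ℓ + ∑ ℓ' ∈ Finset.univ.erase ℓ,
          (B^2/2 * (cc ℓ ℓ' * nn ℓ) + B^2/2 * (cc ℓ' ℓ * nn ℓ'))) := by
    refine Finset.sum_le_sum fun ℓ _ => ?_
    rw [← Finset.add_sum_erase _ _ (Finset.mem_univ ℓ)]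
    exact add_le_add (hdiag ℓ) (Finset.sum_le_sum fun ℓ' _ => hoff ℓ ℓ')
  have hstep2 : ∑ ℓ, (B^2 * nn ℓ + ∑ ℓ' ∈ Finset.univ.erase ℓ,
          (B^2/2 * (cc ℓ ℓ' * nn ℓ) + B^2/2 * (cc ℓ' ℓ * nn ℓ')))
      = B^2 * (∑ ℓ, nn ℓ) + (B^2/2 * X + B^2/2 * Y) := by
    rw [Finset.sum_add_distrib, ← Finset.mul_sum]
    congr 1
    simp_rw [Finset.sum_add_distrib, ← Finset.mul_sum]
    rw [hX, hY]
  have hsnn : ∑ ℓ, nn ℓ ≤ 1 := by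
    have h1 : ∑ j ∈ Finset.univ.image σ, ∑ p, v (j, p) * v (j, p) = ∑ ℓ, nn ℓ := by
      rw [Finset.sum_image (fun x _ y _ h => hσ h)]
      rfl
    have h2 : ∑ j ∈ Finset.univ.image σ, ∑ p, v (j, p) * v (j, p)
        ≤ ∑ j, ∑ p, v (j, p) * v (j, p) :=
      Finset.sum_le_sum_of_subset_of_nonneg (Finset.subset_univ _)
        (fun j _ _ => Finset.sum_nonneg fun p _ => mul_self_nonneg _)
    have h3 : (∑ j, ∑ p, v (j, p) * v (j, p)) = v ⬝ᵥ v := by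
      show _ = ∑ x, v x * v x
      exact (Fintype.sum_prod_type (f := fun x => v x * v x)).symm
    have h6 : Real.sqrt (v ⬝ᵥ v) ≤ 1 := by rw [← norm2_eq_sqrt_dot]; exact hv
    have h4 : v ⬝ᵥ v ≤ 1 := by
      nlinarith [Real.sq_sqrt (dot_self_nonneg v), Real.sqrt_nonneg (v ⬝ᵥ v)]
    linarith
  have hsnn0 : 0 ≤ ∑ ℓ, nn ℓ := Finset.sum_nonneg fun ℓ _ => hnn0 ℓ
  have hXle : X ≤ (∑ ℓ, nn ℓ) * D := by
    rw [hX, Finset.sum_mul]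
    refine Finset.sum_le_sum fun ℓ _ => ?_
    have he : ∑ ℓ' ∈ Finset.univ.erase ℓ, cc ℓ ℓ' * nn ℓ
        = nn ℓ * ∑ ℓ' ∈ Finset.univ.erase ℓ, cc ℓ ℓ' := by
      rw [Finset.mul_sum]
      exact Finset.sum_congr rfl fun _ _ => mul_comm _ _
    rw [he]
    exact mul_le_mul_of_nonneg_left (hrow ℓ) (hnn0 ℓ)
  have htot : ((∑ ℓ, b ℓ • Utilde U (σ ℓ)).mulVec v) ⬝ᵥ ((∑ ℓ, b ℓ • Utilde U (σ ℓ)).mulVec v)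
      ≤ B^2 * (1 + D) := by
    rw [hAv, hdotexp]
    have p2 : B^2 * X ≤ B^2 * ((∑ ℓ, nn ℓ) * D) :=
      mul_le_mul_of_nonneg_left hXle (sq_nonneg B)
    have p3 : (∑ ℓ, nn ℓ) * D ≤ 1 * D := mul_le_mul_of_nonneg_right hsnn hD0
    have p5 : B^2 * ((∑ ℓ, nn ℓ) * D) ≤ B^2 * (1 * D) :=
      mul_le_mul_of_nonneg_left p3 (sq_nonneg B)
    have p4 : B^2 * (∑ ℓ, nn ℓ) ≤ B^2 * 1 := mul_le_mul_of_nonneg_left hsnn (sq_nonneg B)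
    calc ∑ ℓ, ∑ ℓ', (b ℓ * b ℓ') * (z ℓ ⬝ᵥ z ℓ')
        ≤ ∑ ℓ, (B^2 * nn ℓ + ∑ ℓ' ∈ Finset.univ.erase ℓ,
            (B^2/2 * (cc ℓ ℓ' * nn ℓ) + B^2/2 * (cc ℓ' ℓ * nn ℓ'))) := hstep1
      _ = B^2 * (∑ ℓ, nn ℓ) + (B^2/2 * X + B^2/2 * Y) := hstep2
      _ ≤ B^2 * 1 + B^2 * (1 * D) := by
          rw [hYX]
          have : B^2/2 * X + B^2/2 * X = B^2 * X := by ring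
          linarith
      _ = B^2 * (1 + D) := by ring
  rw [norm2_eq_sqrt_dot]
  calc Real.sqrt _ ≤ Real.sqrt (B^2 * (1 + D)) := Real.sqrt_le_sqrt htot
    _ = B * Real.sqrt (1 + D) := by
        rw [Real.sqrt_mul (sq_nonneg B), Real.sqrt_sq hBnn]

/-- Operator norm bound:
‖∑_ℓ b_ℓ Ũ_{j_ℓ}‖₂→₂ ≤ ‖b‖_∞ √(1 + max_{i∈S} ∑_{j∈S, j≠i} λ_max(P_iP_j)^{1/2}). -/
theorem stmt12 {N M m k : ℕ}
    (U : Fin N → Matrix (Fin M) (Fin m) ℝ)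
    (hU : ∀ j, (U j)ᵀ * U j = 1)
    (b : Fin k → ℝ) (σ : Fin k → Fin N) (hσ : Function.Injective σ) :
    opNorm (∑ ℓ, b ℓ • Utilde U (σ ℓ)) ≤
      (⨆ ℓ, |b ℓ|) * Real.sqrt (1 +
        sSup {r : ℝ | ∃ i ∈ Finset.univ.image σ,
          r = ∑ j ∈ (Finset.univ.image σ).erase i,
            Real.sqrt (lamMax ((U i * (U i)ᵀ) * (U j * (U j)ᵀ)))}) := by
  classical
  rcases isEmpty_or_nonempty (Fin k) with hk | hk
  · have hzero : (∑ ℓ : Fin k, b ℓ • Utilde U (σ ℓ)) = 0 := by simp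
    have hB0 : (⨆ ℓ : Fin k, |b ℓ|) = 0 := Real.iSup_of_isEmpty _
    rw [hzero, hB0, zero_mul]
    unfold opNorm
    refine Real.sSup_le ?_ le_rfl
    rintro r ⟨v, hv, rfl⟩
    simp [norm2, Matrix.zero_mulVec]
  · set T := {r : ℝ | ∃ i ∈ Finset.univ.image σ,
        r = ∑ j ∈ (Finset.univ.image σ).erase i,
          Real.sqrt (lamMax ((U i * (U i)ᵀ) * (U j * (U j)ᵀ)))} with hT
    have hTeq : T = (fun i => ∑ j ∈ (Finset.univ.image σ).erase i,
        Real.sqrt (lamMax ((U i * (U i)ᵀ) * (U j * (U j)ᵀ)))) '' ↑(Finset.univ.image σ) := by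
      ext r
      constructor
      · rintro ⟨i, hi, rfl⟩; exact ⟨i, hi, rfl⟩
      · rintro ⟨i, hi, rfl⟩; exact ⟨i, hi, rfl⟩
    have hTbdd : BddAbove T := by
      rw [hTeq]
      exact ((Finset.univ.image σ).finite_toSet.image _).bddAbove
    have hBnn : 0 ≤ ⨆ ℓ, |b ℓ| := Real.iSup_nonneg fun ℓ => abs_nonneg _
    have hBle : ∀ ℓ, |b ℓ| ≤ ⨆ ℓ', |b ℓ'| := fun ℓ =>
      le_ciSup (f := fun ℓ : Fin k => |b ℓ|) (Set.Finite.bddAbove (Set.finite_range _)) ℓ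
    have hD0 : 0 ≤ sSup T := by
      obtain ⟨ℓ0⟩ := hk
      have hmem : (∑ j ∈ (Finset.univ.image σ).erase (σ ℓ0),
          Real.sqrt (lamMax ((U (σ ℓ0) * (U (σ ℓ0))ᵀ) * (U j * (U j)ᵀ)))) ∈ T :=
        ⟨σ ℓ0, Finset.mem_image_of_mem _ (Finset.mem_univ _), rfl⟩
      exact le_trans (Finset.sum_nonneg fun j _ => Real.sqrt_nonneg _) (le_csSup hTbdd hmem)
    have hrow : ∀ ℓ : Fin k, (∑ ℓ' ∈ Finset.univ.erase ℓ,
        Real.sqrt (lamMax ((U (σ ℓ) * (U (σ ℓ))ᵀ) * (U (σ ℓ') * (U (σ ℓ'))ᵀ)))) ≤ sSup T := by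
      intro ℓ
      have himg : ∑ ℓ' ∈ Finset.univ.erase ℓ,
            Real.sqrt (lamMax ((U (σ ℓ) * (U (σ ℓ))ᵀ) * (U (σ ℓ') * (U (σ ℓ'))ᵀ)))
          = ∑ j ∈ (Finset.univ.image σ).erase (σ ℓ),
            Real.sqrt (lamMax ((U (σ ℓ) * (U (σ ℓ))ᵀ) * (U j * (U j)ᵀ))) := by
        rw [← Finset.image_erase hσ, Finset.sum_image (fun a _ c _ h => hσ h)]
      rw [himg]
      exact le_csSup hTbdd ⟨σ ℓ, Finset.mem_image_of_mem _ (Finset.mem_univ _), rfl⟩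
    unfold opNorm
    refine Real.sSup_le ?_ (mul_nonneg hBnn (Real.sqrt_nonneg _))
    rintro r ⟨v, hv, rfl⟩
    exact key_est U hU b σ hσ v hv _ _ hBle hBnn hD0 hrow
end
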